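/- Let W be a real symmetric positive definite (n+1)×(n+1) matrix, v ∈ ℝ^{n+1} a nonzero vector, a ∈ ℝ with a ≠ 0, and σ > 0, β ∈ ℝ with β ≠ 0. Set A = a·vvᵀ and t = vᵀWv (so t > 0). Then for s = 1/(a t) − σ/β, the matrix W⁻¹ − sA is invertible and β − σ⟨A, (W⁻¹ − sA)⁻¹⟩ = 0, where ⟨·,·⟩ denotes the trace inner product; i.e., s is a root of the exact line-search gradient equation for a rank-one constraint matrix. -/

import Mathlib

open Matrix

private lemma vmv_mul {m : ℕ} (x y : Fin m → ℝ) (M : Matrix (Fin m) (Fin m) ℝ) :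
    vecMulVec x y * M = vecMulVec x (y ᵥ* M) := by
  ext i j
  simp only [mul_apply, vecMulVec_apply, vecMul, dotProduct]
  rw [Finset.mul_sum]
  exact Finset.sum_congr rfl fun k _ => by ring

private lemma mul_vmv {m : ℕ} (x y : Fin m → ℝ) (M : Matrix (Fin m) (Fin m) ℝ) :
    M * vecMulVec x y = vecMulVec (M *ᵥ x) y := by
  ext i j
  simp only [mul_apply, vecMulVec_apply, mulVec, dotProduct]
  rw [Finset.sum_mul]
  exact Finset.sum_congr rfl fun k _ => by ring

private lemma trace_vmv {m : ℕ} (x y : Fin m → ℝ) :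
    (vecMulVec x y).trace = x ⬝ᵥ y := by
  simp [trace, vecMulVec_apply, dotProduct, diag]

theorem stmt16 (n : ℕ) (W : Matrix (Fin (n + 1)) (Fin (n + 1)) ℝ) (hW : W.PosDef)
    (v : Fin (n + 1) → ℝ) (hv : v ≠ 0) (a : ℝ) (ha : a ≠ 0)
    (σ : ℝ) (hσ : 0 < σ) (β : ℝ) (hβ : β ≠ 0) :
    IsUnit (W⁻¹ - (1 / (a * (v ⬝ᵥ W.mulVec v)) - σ / β) • (a • Matrix.vecMulVec v v)).det ∧
    β - σ * ((a • Matrix.vecMulVec v v) *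
        (W⁻¹ - (1 / (a * (v ⬝ᵥ W.mulVec v)) - σ / β) • (a • Matrix.vecMulVec v v))⁻¹).trace
      = 0 := by
  set t : ℝ := v ⬝ᵥ W.mulVec v with hts
  have ht : 0 < t := by
    have := hW.dotProduct_mulVec_pos hv
    simpa [hts] using this
  have ht0 : t ≠ 0 := ne_of_gt ht
  have hσ0 : σ ≠ 0 := ne_of_gt hσ
  have hsymm : Wᵀ = W := by
    have := hW.1
    simpa [Matrix.IsHermitian, Matrix.conjTranspose_eq_transpose_of_trivial] using this
  have hvW : v ᵥ* W = W *ᵥ v := by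
    rw [← Matrix.mulVec_transpose, hsymm]
  set s : ℝ := 1 / (a * t) - σ / β with hs
  set c : ℝ := (β - a * σ * t) / (a * σ * t ^ 2) with hc
  set M : Matrix (Fin (n + 1)) (Fin (n + 1)) ℝ :=
    W⁻¹ - s • (a • Matrix.vecMulVec v v) with hM
  set B : Matrix (Fin (n + 1)) (Fin (n + 1)) ℝ :=
    W + c • Matrix.vecMulVec (W *ᵥ v) (W *ᵥ v) with hB
  have hdetW : IsUnit W.det := isUnit_iff_ne_zero.2 (ne_of_gt hW.det_pos)
  have hWinv : W⁻¹ * W = 1 := Matrix.nonsing_inv_mul W hdetW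
  have hWv : W⁻¹ *ᵥ (W *ᵥ v) = v := by
    rw [Matrix.mulVec_mulVec, hWinv, Matrix.one_mulVec]
  have key : v ᵥ* Matrix.vecMulVec (W *ᵥ v) (W *ᵥ v) = t • (W *ᵥ v) := by
    ext j
    simp only [Matrix.vecMul, Matrix.vecMulVec_apply, dotProduct, Pi.smul_apply, smul_eq_mul]
    rw [show (∑ i, v i * ((W *ᵥ v) i * (W *ᵥ v) j))
        = (∑ i, v i * (W *ᵥ v) i) * (W *ᵥ v) j by
      rw [Finset.sum_mul]; exact Finset.sum_congr rfl fun k _ => by ring]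
    rfl
  have h4 : Matrix.vecMulVec v (t • (W *ᵥ v)) = t • Matrix.vecMulVec v (W *ᵥ v) := by
    ext i j; simp [Matrix.vecMulVec_apply, mul_comm, mul_left_comm]
  have hcoef : c - s * a - s * a * c * t = 0 := by
    rw [hs, hc]
    field_simp
    ring
  have expand : M * B = 1 + (c - s * a - s * a * c * t) • Matrix.vecMulVec v (W *ᵥ v) := by
    rw [hM, hB, Matrix.sub_mul, Matrix.mul_add, Matrix.mul_add, Matrix.smul_mul,
      Matrix.smul_mul, Matrix.mul_smul, Matrix.mul_smul, Matrix.smul_mul, Matrix.smul_mul,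
      hWinv, mul_vmv, hWv, vmv_mul, hvW, vmv_mul, key, h4]
    module
  have hMB : M * B = 1 := by rw [expand, hcoef, zero_smul, add_zero]
  have hdet : IsUnit M.det := Matrix.isUnit_det_of_right_inverse hMB
  have hinv : M⁻¹ = B := Matrix.inv_eq_right_inv hMB
  refine ⟨hdet, ?_⟩
  rw [hinv, hB, Matrix.smul_mul, Matrix.mul_add, Matrix.mul_smul, vmv_mul, hvW, vmv_mul,
    key, h4, Matrix.trace_smul, Matrix.trace_add, Matrix.trace_smul, Matrix.trace_smul,
    trace_vmv]
  have hdp : v ⬝ᵥ (W *ᵥ v) = t := hts.symm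
  rw [hdp, hc]
  simp only [smul_eq_mul]
  field_simp
  ring
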